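/- arXiv:gr-qc/0202094 — 8 statements merged into one kernel-verified Lean document; each statement's English description precedes it below -/
import Mathlib

section
/- Let E be a finite-dimensional real inner product space, let A be a linear isometry (orthogonal transformation) of E, and let a ∈ E. Then the infimum over x ∈ E of ‖A x + a − x‖ equals ‖P a‖, where P is the orthogonal projection of E onto the fixed subspace ker(A − id); moreover this infimum is attained at some x ∈ E. -/
open scoped RealInnerProductSpace

/-- For a linear isometry `A` of a finite-dimensional real inner product space `E` and a
vector `a ∈ E`, the infimum over `x ∈ E` of `‖A x + a - x‖` equals the norm of the
orthogonal projection of `a` onto the fixed subspace `ker (A - id)`, and this infimum is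
attained (i.e. it is the least element of the set of values). -/
theorem inf_dist_affine_isometry_eq_norm_proj
    (E : Type*) [NormedAddCommGroup E] [InnerProductSpace ℝ E] [FiniteDimensional ℝ E]
    (A : E ≃ₗᵢ[ℝ] E) (a : E) :
    IsLeast (Set.range fun x : E => ‖A x + a - x‖)
      ‖(Submodule.orthogonalProjectionOnto
          (LinearMap.ker ((A.toLinearEquiv : E →ₗ[ℝ] E) - LinearMap.id)) a : E)‖ := by
  set T : E →ₗ[ℝ] E := (A.toLinearEquiv : E →ₗ[ℝ] E) - LinearMap.id with hT
  set F := LinearMap.ker T with hF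
  have hTx : ∀ x : E, T x = A x - x := fun x => by simp [hT]
  have hle : LinearMap.range T ≤ Fᗮ := by
    rintro _ ⟨x, rfl⟩
    intro f hf
    have hfA : A f = f := by
      have h1 : T f = 0 := hf
      rw [hTx] at h1
      exact sub_eq_zero.mp h1
    rw [hTx]
    have : ⟪A f, A x⟫ = ⟪f, x⟫ := A.inner_map_map f x
    rw [inner_sub_right, ← this, hfA]
    ring
  have hrange : LinearMap.range T = Fᗮ := by
    apply Submodule.eq_of_le_of_finrank_eq hle
    have h1 := LinearMap.finrank_range_add_finrank_ker T
    have h2 := Submodule.finrank_add_finrank_orthogonal (K := F)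
    have h3 : Module.finrank ℝ (LinearMap.ker T) = Module.finrank ℝ F := rfl
    omega
  have hPTzero : ∀ x : E, Submodule.orthogonalProjectionOnto F (T x) = 0 := fun x =>
    Submodule.orthogonalProjectionOnto_apply_of_mem_orthogonal (hle ⟨x, rfl⟩)
  constructor
  · -- attained: a - P a ∈ Fᗮ = range T, pick x with T x = -(a - P a)
    have hmem : a - (Submodule.orthogonalProjectionOnto F a : E) ∈ LinearMap.range T := by
      rw [hrange]; exact Submodule.sub_starProjection_mem_orthogonal a
    obtain ⟨x, hx⟩ := hmem
    refine ⟨-x, ?_⟩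
    show ‖A (-x) + a - (-x)‖ = _
    have : A (-x) + a - (-x) = T (-x) + a := by rw [hTx]; abel
    rw [this, map_neg, hx]
    congr 1
    abel
  · rintro _ ⟨x, rfl⟩
    have heq : A x + a - x = T x + a := by rw [hTx]; abel
    have hP : Submodule.orthogonalProjectionOnto F (T x + a) = Submodule.orthogonalProjectionOnto F a := by
      rw [map_add, hPTzero, zero_add]
    calc ‖(Submodule.orthogonalProjectionOnto F a : E)‖
        = ‖(Submodule.orthogonalProjectionOnto F (T x + a) : E)‖ := by rw [hP]
      _ ≤ ‖T x + a‖ := by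
          have h := (Submodule.orthogonalProjectionOnto F).le_opNorm (T x + a)
          have hn : ‖Submodule.orthogonalProjectionOnto F‖ ≤ 1 := Submodule.orthogonalProjectionOnto_norm_le F
          rw [Submodule.coe_norm] at h
          nlinarith [norm_nonneg (T x + a)]
      _ = ‖A x + a - x‖ := by rw [heq]
end

section
/- Let E be a finite-dimensional real inner product space, let A be a linear isometry of E, and let a ∈ E. The affine map g : x ↦ A x + a has a fixed point in E if and only if the orthogonal projection of a onto the fixed subspace ker(A − id) is zero. In particular, if that projection is nonzero, then g acts freely on E (has no fixed point). -/
open scoped RealInnerProductSpace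

/-- For a linear isometry `A` of a finite-dimensional real inner product space `E` and
`a ∈ E`, the affine map `g : x ↦ A x + a` has a fixed point iff the orthogonal projection
of `a` onto the fixed subspace `ker (A - id)` vanishes; in particular, if that projection
is nonzero then `g` has no fixed point (acts freely). -/
theorem affine_isometry_has_fixed_point_iff_proj_eq_zero
    (E : Type*) [NormedAddCommGroup E] [InnerProductSpace ℝ E] [FiniteDimensional ℝ E]
    (A : E ≃ₗᵢ[ℝ] E) (a : E) :
    ((∃ x : E, A x + a = x) ↔
      Submodule.orthogonalProjectionOnto (LinearMap.ker ((A.toLinearEquiv : E →ₗ[ℝ] E) - LinearMap.id)) a = 0)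
    ∧ (Submodule.orthogonalProjectionOnto
          (LinearMap.ker ((A.toLinearEquiv : E →ₗ[ℝ] E) - LinearMap.id)) a ≠ 0 →
        ∀ x : E, A x + a ≠ x) := by
  set T : E →ₗ[ℝ] E := (A.toLinearEquiv : E →ₗ[ℝ] E) - LinearMap.id with hT
  have hTapp : ∀ x, T x = A x - x := fun x => rfl
  have hrange : (LinearMap.range T)ᗮ = LinearMap.ker T := by
    ext v
    simp only [Submodule.mem_orthogonal, LinearMap.mem_ker]
    constructor
    · intro h
      have key : ∀ x : E, ⟪x, A.symm v - v⟫ = 0 := by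
        intro x
        have h1 : ⟪A x - x, v⟫ = 0 := h _ (LinearMap.mem_range.2 ⟨x, hTapp x⟩)
        have h2 : ⟪A x, v⟫ = ⟪x, A.symm v⟫ := by
          conv_lhs => rw [show v = A (A.symm v) by simp]
          exact A.inner_map_map x (A.symm v)
        rw [inner_sub_right, ← h1, inner_sub_left, h2]
      have hv : A.symm v - v = 0 := by
        have := key (A.symm v - v)
        rwa [inner_self_eq_zero] at this
      have hv' : A.symm v = v := by rwa [sub_eq_zero] at hv
      have hAv := congrArg A hv'
      rw [A.apply_symm_apply] at hAv
      rw [hTapp, sub_eq_zero]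
      exact hAv.symm
    · intro hv u hu
      obtain ⟨x, rfl⟩ := LinearMap.mem_range.1 hu
      have hAv : A v = v := by
        have := hTapp v ▸ hv
        rwa [sub_eq_zero] at this
      rw [hTapp, inner_sub_left, sub_eq_zero]
      calc ⟪A x, v⟫ = ⟪A x, A v⟫ := by rw [hAv]
        _ = ⟪x, v⟫ := A.inner_map_map x v
  have hker : (LinearMap.ker T)ᗮ = LinearMap.range T := by
    rw [← hrange, Submodule.orthogonal_orthogonal]
  have hfix : (∃ x : E, A x + a = x) ↔ a ∈ LinearMap.range T := by
    constructor
    · rintro ⟨x, hx⟩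
      have ha : a = x - A x := eq_sub_iff_add_eq.2 (by rw [add_comm]; exact hx)
      refine ⟨-x, ?_⟩
      rw [hTapp]
      simp only [map_neg]
      rw [ha]
      abel
    · rintro ⟨x, hx⟩
      refine ⟨-x, ?_⟩
      rw [hTapp] at hx
      simp only [map_neg]
      rw [← hx]
      abel
  have hproj : Submodule.orthogonalProjectionOnto (LinearMap.ker T) a = 0 ↔ a ∈ (LinearMap.ker T)ᗮ :=
    Submodule.orthogonalProjectionOnto_eq_zero_iff
  constructor
  · rw [hfix, hproj, hker]
  · intro hne x hx
    exact hne ((hproj.2 (hker ▸ hfix.1 ⟨x, hx⟩)))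
end

section
/- Let E be a real inner product space, let D be a linear isometry of E, and let a, b, c ∈ E satisfy D a = a, D b = c and D c = c − b. Then ‖b‖ = ‖c‖, ⟪a,b⟫ = 0, ⟪a,c⟫ = 0, and 2⟪b,c⟫ = ‖c‖² (so b and c have equal lengths and make a fixed angle with cosine 1/2, and a is orthogonal to both). -/
open scoped RealInnerProductSpace

/-- Class 𝒢₅ constraint: if a linear isometry `D` of a real inner product space satisfies
`D a = a`, `D b = c` and `D c = c - b`, then `‖b‖ = ‖c‖`, `a ⊥ b`, `a ⊥ c`, and
`2⟪b,c⟫ = ‖c‖²` (the angle between `b` and `c` has cosine `1/2`). -/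
theorem G5_basis_constraints
    (E : Type*) [NormedAddCommGroup E] [InnerProductSpace ℝ E]
    (D : E ≃ₗᵢ[ℝ] E) (a b c : E)
    (ha : D a = a) (hb : D b = c) (hc : D c = c - b) :
    ‖b‖ = ‖c‖ ∧ ⟪a, b⟫ = 0 ∧ ⟪a, c⟫ = 0 ∧ 2 * ⟪b, c⟫ = ‖c‖ ^ 2 := by
  have hnb : ‖b‖ = ‖c‖ := by rw [← hb, D.norm_map]
  have hab : ⟪a, b⟫ = ⟪a, c⟫ := by
    have := D.inner_map_map a b
    rw [ha, hb] at this; exact this.symm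
  have hac : ⟪a, c⟫ = ⟪a, c⟫ - ⟪a, b⟫ := by
    have := D.inner_map_map a c
    rw [ha, hc, inner_sub_right] at this; exact this.symm
  have hab0 : ⟪a, b⟫ = 0 := by linarith
  have hbc : 2 * ⟪b, c⟫ = ‖c‖ ^ 2 := by
    have := D.inner_map_map b c
    rw [hb, hc, inner_sub_right, real_inner_self_eq_norm_sq] at this
    have hsym : ⟪c, b⟫ = ⟪b, c⟫ := real_inner_comm b c
    linarith
  exact ⟨hnb, hab0, by linarith, hbc⟩
end

section
/- With Γ the 𝒢₆ covering group described in the context, Γ acts freely on E: every element of Γ other than the identity has no fixed point in E. -/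
set_option linter.unreachableTactic false
set_option linter.unusedTactic false

open scoped RealInnerProductSpace

private lemma parity_aux (e e' k m m' : ℤ) (he : e = 1 ∨ e = -1) (he' : e' = 1 ∨ e' = -1)
    (hk : k = 1 ∨ k = -1) (h : Odd m ↔ e = -1) (h' : Odd m' ↔ e' = -1) :
    Odd (k * m' + m) ↔ e * e' = -1 := by
  rw [Int.odd_iff] at h h' ⊢
  rcases he with rfl | rfl <;> rcases he' with rfl | rfl <;> rcases hk with rfl | rfl <;>
    norm_num at * <;> omega

/-- Elements of the 𝒢₆ group: diagonal sign matrix with determinant 1, translation part an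
integer combination of `s 0, s 1, s 2` with parities determined by the signs. -/
def GoodIso (s : Fin 3 → ℝ) (g : EuclideanSpace ℝ (Fin 3) ≃ᵢ EuclideanSpace ℝ (Fin 3)) : Prop :=
  ∃ ε n : Fin 3 → ℤ,
    (∀ i, ε i = 1 ∨ ε i = -1) ∧ ε 0 * ε 1 * ε 2 = 1 ∧
    (Odd (n 0) ↔ ε 1 = -1) ∧ (Odd (n 1) ↔ ε 0 = -1) ∧ (Odd (n 2) ↔ ε 0 = -1) ∧
    ∀ (x : EuclideanSpace ℝ (Fin 3)) (i : Fin 3),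
      g x i = (ε i : ℝ) * x i + (n i : ℝ) * s i

lemma goodIso_one (s : Fin 3 → ℝ) : GoodIso s 1 := by
  refine ⟨fun _ => 1, fun _ => 0, fun i => Or.inl rfl, by norm_num, by norm_num, by norm_num,
    by norm_num, fun x i => by simp⟩

lemma goodIso_mul {s : Fin 3 → ℝ} {g h : EuclideanSpace ℝ (Fin 3) ≃ᵢ EuclideanSpace ℝ (Fin 3)}
    (hg : GoodIso s g) (hh : GoodIso s h) : GoodIso s (g * h) := by
  obtain ⟨ε, n, hε, hdet, h0, h1, h2, hf⟩ := hg
  obtain ⟨ε', n', hε', hdet', h0', h1', h2', hf'⟩ := hh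
  refine ⟨fun i => ε i * ε' i, fun i => ε i * n' i + n i, fun i => ?_, ?_,
    parity_aux _ _ _ _ _ (hε 1) (hε' 1) (hε 0) h0 h0',
    parity_aux _ _ _ _ _ (hε 0) (hε' 0) (hε 1) h1 h1',
    parity_aux _ _ _ _ _ (hε 0) (hε' 0) (hε 2) h2 h2', ?_⟩
  · rcases hε i with h | h <;> rcases hε' i with h' | h' <;> simp [h, h']
  · have : ε 0 * ε' 0 * (ε 1 * ε' 1) * (ε 2 * ε' 2)
        = ε 0 * ε 1 * ε 2 * (ε' 0 * ε' 1 * ε' 2) := by ring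
    rw [this, hdet, hdet', one_mul]
  · intro x i
    have hgh : (g * h) x = g (h x) := rfl
    rw [hgh, hf, hf']
    push_cast
    ring

lemma goodIso_inv {s : Fin 3 → ℝ} {g : EuclideanSpace ℝ (Fin 3) ≃ᵢ EuclideanSpace ℝ (Fin 3)}
    (hg : GoodIso s g) : GoodIso s g⁻¹ := by
  obtain ⟨ε, n, hε, hdet, h0, h1, h2, hf⟩ := hg
  have hsq : ∀ i, (ε i : ℝ) * (ε i : ℝ) = 1 := by
    intro i; rcases hε i with h | h <;> simp [h]
  refine ⟨ε, fun i => -(ε i * n i), hε, hdet, ?_, ?_, ?_, ?_⟩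
  · rw [← h0]; rcases hε 0 with h | h <;> simp [h, Int.odd_iff] at *
  · rw [← h1]; rcases hε 1 with h | h <;> simp [h, Int.odd_iff] at *
  · rw [← h2]; rcases hε 2 with h | h <;> simp [h, Int.odd_iff] at *
  · intro x i
    have key : g (g⁻¹ x) = x := g.apply_symm_apply x
    have := hf (g⁻¹ x) i
    rw [key] at this
    have h2 : (ε i : ℝ) * x i
        = (ε i : ℝ) * (ε i : ℝ) * (g⁻¹ x i) + (ε i : ℝ) * (n i : ℝ) * s i := by
      rw [this]; ring
    rw [hsq i, one_mul] at h2
    push_cast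
    linarith

/-- The covering group `Γ` of a flat 3-manifold of class 𝒢₆ acts freely on Euclidean 3-space: every element of `Γ` other than the identity has no fixed point. -/
theorem G6_acts_freely
    (α β γ : ℝ) (hα : 0 < α) (hβ : 0 < β) (hγ : 0 < γ)
    (a b c : EuclideanSpace ℝ (Fin 3))
    (ha : a = α • EuclideanSpace.single (0 : Fin 3) (1 : ℝ))
    (hb : b = β • EuclideanSpace.single (1 : Fin 3) (1 : ℝ))
    (hc : c = γ • EuclideanSpace.single (2 : Fin 3) (1 : ℝ))
    (A₁ A₂ A₃ : EuclideanSpace ℝ (Fin 3) ≃ₗᵢ[ℝ] EuclideanSpace ℝ (Fin 3))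
    (hA₁ : ∀ (x : EuclideanSpace ℝ (Fin 3)) (i : Fin 3),
      A₁ x i = if i = 0 then x i else -x i)
    (hA₂ : ∀ (x : EuclideanSpace ℝ (Fin 3)) (i : Fin 3),
      A₂ x i = if i = 1 then x i else -x i)
    (hA₃ : ∀ (x : EuclideanSpace ℝ (Fin 3)) (i : Fin 3),
      A₃ x i = if i = 2 then x i else -x i)
    (g₁ g₂ g₃ : EuclideanSpace ℝ (Fin 3) ≃ᵢ EuclideanSpace ℝ (Fin 3))
    (hg₁ : ∀ x, g₁ x = A₁ x + a)
    (hg₂ : ∀ x, g₂ x = A₂ x + (b + c))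
    (hg₃ : ∀ x, g₃ x = A₃ x + (a + b + c))
    (Γ : Subgroup (EuclideanSpace ℝ (Fin 3) ≃ᵢ EuclideanSpace ℝ (Fin 3)))
    (hΓ : Γ = Subgroup.closure {g₁, g₂, g₃}) :
    ∀ g ∈ Γ, g ≠ 1 → ∀ x : EuclideanSpace ℝ (Fin 3), g x ≠ x := by
  set s : Fin 3 → ℝ := ![α, β, γ] with hs_def
  have hs : ∀ i : Fin 3, 0 < s i := by
    intro i; fin_cases i <;> simpa [hs_def]
  have hgood₁ : GoodIso s g₁ := by
    refine ⟨![1, -1, -1], ![1, 0, 0], by decide, by decide, by decide, by decide, by decide, ?_⟩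
    intro x i
    rw [hg₁]
    fin_cases i <;>
      simp [hA₁, ha, PiLp.add_apply, PiLp.smul_apply, EuclideanSpace.single_apply, hs_def]
  have hgood₂ : GoodIso s g₂ := by
    refine ⟨![-1, 1, -1], ![0, 1, 1], by decide, by decide, by decide, by decide, by decide, ?_⟩
    intro x i
    rw [hg₂]
    fin_cases i <;>
      simp [hA₂, hb, hc, PiLp.add_apply, PiLp.smul_apply, EuclideanSpace.single_apply, hs_def] <;>
      ring
  have hgood₃ : GoodIso s g₃ := by
    refine ⟨![-1, -1, 1], ![1, 1, 1], by decide, by decide, by decide, by decide, by decide, ?_⟩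
    intro x i
    rw [hg₃]
    fin_cases i <;>
      simp [hA₃, ha, hb, hc, PiLp.add_apply, PiLp.smul_apply, EuclideanSpace.single_apply,
        hs_def] <;>
      ring
  have good : ∀ g ∈ Γ, GoodIso s g := by
    subst hΓ
    intro g hg
    induction hg using Subgroup.closure_induction with
    | mem x hx =>
      simp only [Set.mem_insert_iff, Set.mem_singleton_iff] at hx
      rcases hx with rfl | rfl | rfl
      · exact hgood₁
      · exact hgood₂
      · exact hgood₃
    | one => exact goodIso_one s
    | mul x y _ _ hx hy => exact goodIso_mul hx hy
    | inv x _ hx => exact goodIso_inv hx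
  intro g hg hne x heq
  obtain ⟨ε, n, hε, hdet, h0, h1, h2, hf⟩ := good g hg
  have hx : ∀ i, x i = (ε i : ℝ) * x i + (n i : ℝ) * s i := fun i => by rw [← hf x i, heq]
  have zero_of : ∀ i, ε i = 1 → n i = 0 := by
    intro i h
    have hxi := hx i
    rw [h] at hxi
    push_cast at hxi
    have hns : (n i : ℝ) * s i = 0 := by linarith
    have := (mul_eq_zero.mp hns).resolve_right (ne_of_gt (hs i))
    exact_mod_cast this
  rcases hε 0 with e0 | e0 <;> rcases hε 1 with e1 | e1 <;> rcases hε 2 with e2 | e2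
  · -- identity: g = 1, contradiction with hne
    refine hne (IsometryEquiv.ext fun y => ?_)
    refine PiLp.ext fun i => ?_
    have hn : ∀ i, n i = 0 := by
      intro i; fin_cases i
      · exact zero_of 0 e0
      · exact zero_of 1 e1
      · exact zero_of 2 e2
    have he : ∀ i, ε i = 1 := by
      intro i; fin_cases i <;> assumption
    rw [hf y i, he i, hn i]
    norm_num
  · rw [e0, e1, e2] at hdet; norm_num at hdet
  · have hodd := h0.mpr e1
    rw [zero_of 0 e0] at hodd
    exact absurd hodd (by decide)
  · have hodd := h0.mpr e1
    rw [zero_of 0 e0] at hodd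
    exact absurd hodd (by decide)
  · have hodd := h1.mpr e0
    rw [zero_of 1 e1] at hodd
    exact absurd hodd (by decide)
  · have hodd := h1.mpr e0
    rw [zero_of 1 e1] at hodd
    exact absurd hodd (by decide)
  · have hodd := h2.mpr e0
    rw [zero_of 2 e2] at hodd
    exact absurd hodd (by decide)
  · rw [e0, e1, e2] at hdet; norm_num at hdet
end

section
/- With Γ the 𝒢₆ covering group described in the context, the infimum, over all g ∈ Γ with g ≠ id and all x ∈ E, of the distance dist(x, g x) equals min{α, β, γ}, and this infimum is attained. Equivalently, the length of the smallest closed geodesic of the flat manifold E/Γ is min{|a|, |b|, |c|}, so its injectivity radius is r_inj = (1/2) min{|a|, |b|, |c|}. -/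
open scoped RealInnerProductSpace

namespace G6aux

noncomputable def chi (n : ℤ) : ℤ := if Even n then 1 else -1

lemma chi_add (m n : ℤ) : chi (m + n) = chi m * chi n := by
  unfold chi
  by_cases hm : Even m <;> by_cases hn : Even n <;>
    simp [hm, hn, Int.even_add]

lemma chi_neg (n : ℤ) : chi (-n) = chi n := by simp [chi]

lemma chi_pm (e n : ℤ) (he : e = 1 ∨ e = -1) : chi (e * n) = chi n := by
  rcases he with rfl | rfl
  · rw [one_mul]
  · rw [neg_one_mul, chi_neg]

lemma chi_ne_zero {n : ℤ} (h : chi n = -1) : n ≠ 0 := by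
  rintro rfl; simp [chi] at h

def P (s : Fin 3 → ℝ) (g : EuclideanSpace ℝ (Fin 3) ≃ᵢ EuclideanSpace ℝ (Fin 3)) : Prop :=
  ∃ ε k : Fin 3 → ℤ,
    ((∀ i, ε i = 1 ∨ ε i = -1) ∧ ε 0 * ε 1 * ε 2 = 1 ∧
      ε 1 = chi (k 0) ∧ ε 0 = chi (k 1) ∧ ε 0 = chi (k 2)) ∧
    ∀ (x : EuclideanSpace ℝ (Fin 3)) (i : Fin 3),
      g x i = (ε i : ℝ) * x i + (k i : ℝ) * s i

lemma P_one (s : Fin 3 → ℝ) : P s 1 := by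
  refine ⟨fun _ => 1, fun _ => 0, ⟨fun i => Or.inl rfl, by norm_num, ?_, ?_, ?_⟩, ?_⟩
  · simp [chi]
  · simp [chi]
  · simp [chi]
  · intro x i; simp

lemma P_mul {s : Fin 3 → ℝ} {g h : EuclideanSpace ℝ (Fin 3) ≃ᵢ EuclideanSpace ℝ (Fin 3)}
    (hg : P s g) (hh : P s h) : P s (g * h) := by
  obtain ⟨ε, k, ⟨hpm, hK, h0, h1, h2⟩, hgk⟩ := hg
  obtain ⟨η, l, ⟨hpm', hK', h0', h1', h2'⟩, hhl⟩ := hh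
  refine ⟨fun i => ε i * η i, fun i => ε i * l i + k i, ⟨?_, ?_, ?_, ?_, ?_⟩, ?_⟩
  · intro i; rcases hpm i with h | h <;> rcases hpm' i with h' | h' <;> simp [h, h']
  · have : ε 0 * η 0 * (ε 1 * η 1) * (ε 2 * η 2) = ε 0 * ε 1 * ε 2 * (η 0 * η 1 * η 2) := by ring
    simp only []
    rw [this, hK, hK', one_mul]
  · simp only []
    rw [chi_add, chi_pm _ _ (hpm 0), ← h0, ← h0']; ring
  · simp only []
    rw [chi_add, chi_pm _ _ (hpm 1), ← h1, ← h1']; ring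
  · simp only []
    rw [chi_add, chi_pm _ _ (hpm 2), ← h2, ← h2']; ring
  · intro x i
    have : (g * h) x = g (h x) := rfl
    rw [this, hgk (h x) i, hhl x i]
    push_cast
    ring

lemma P_inv {s : Fin 3 → ℝ} {g : EuclideanSpace ℝ (Fin 3) ≃ᵢ EuclideanSpace ℝ (Fin 3)}
    (hg : P s g) : P s g⁻¹ := by
  obtain ⟨ε, k, ⟨hpm, hK, h0, h1, h2⟩, hgk⟩ := hg
  refine ⟨ε, fun i => -(ε i * k i), ⟨hpm, hK, ?_, ?_, ?_⟩, ?_⟩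
  · simp only []; rw [chi_neg, chi_pm _ _ (hpm 0)]; exact h0
  · simp only []; rw [chi_neg, chi_pm _ _ (hpm 1)]; exact h1
  · simp only []; rw [chi_neg, chi_pm _ _ (hpm 2)]; exact h2
  · intro x i
    have hsq : (ε i : ℝ) * (ε i : ℝ) = 1 := by
      rcases hpm i with h | h <;> rw [h] <;> norm_num
    have happ : g (g⁻¹ x) = x := g.apply_symm_apply x
    have hx : (ε i : ℝ) * (g⁻¹ x) i + (k i : ℝ) * s i = x i := by
      have := hgk (g⁻¹ x) i
      rw [happ] at this
      linarith [this]
    push_cast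
    linear_combination (ε i : ℝ) * hx - ((g⁻¹ x) i) * hsq

lemma coord_le_norm (v : EuclideanSpace ℝ (Fin 3)) (i : Fin 3) : |v i| ≤ ‖v‖ := by
  have h2 : v i ^ 2 ≤ ∑ j, ‖v j‖ ^ 2 := by
    simpa [Real.norm_eq_abs, sq_abs] using Finset.single_le_sum (f := fun j => ‖v j‖ ^ 2)
      (fun j _ => sq_nonneg _) (Finset.mem_univ i)
  rw [EuclideanSpace.norm_eq, ← Real.sqrt_sq_eq_abs]
  exact Real.sqrt_le_sqrt h2

lemma P_bound {s : Fin 3 → ℝ} (hs : ∀ i, 0 < s i)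
    {g : EuclideanSpace ℝ (Fin 3) ≃ᵢ EuclideanSpace ℝ (Fin 3)}
    (hg : P s g) (hne : g ≠ 1) (x : EuclideanSpace ℝ (Fin 3)) :
    min (s 0) (min (s 1) (s 2)) ≤ dist x (g x) := by
  obtain ⟨ε, k, ⟨hpm, hK, h0, h1, h2⟩, hgk⟩ := hg
  obtain ⟨i, hεi, hki⟩ : ∃ i, ε i = 1 ∧ k i ≠ 0 := by
    rcases hpm 0 with e0 | e0 <;> rcases hpm 1 with e1 | e1
    · -- identity rotation
      by_contra hcon
      push_neg at hcon
      have e2 : ε 2 = 1 := by rw [e0, e1] at hK; omega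
      apply hne
      apply IsometryEquiv.ext
      intro z
      ext j
      rw [hgk z j]
      have h1' : (1 : EuclideanSpace ℝ (Fin 3) ≃ᵢ EuclideanSpace ℝ (Fin 3)) z = z := rfl
      rw [h1']
      fin_cases j <;>
        simp [e0, e1, e2, hcon 0 e0, hcon 1 e1, hcon 2 e2]
    · exact ⟨0, e0, chi_ne_zero (by rw [← h0, e1])⟩
    · exact ⟨1, e1, chi_ne_zero (by rw [← h1, e0])⟩
    · have e2 : ε 2 = 1 := by rw [e0, e1] at hK; omega
      exact ⟨2, e2, chi_ne_zero (by rw [← h2, e0])⟩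
  have hcast : ((ε i : ℤ) : ℝ) = 1 := by rw [hεi]; norm_num
  have hcoord : x i - g x i = -((k i : ℝ) * s i) := by
    rw [hgk x i, hcast]; ring
  have habs : (1 : ℝ) ≤ |(k i : ℝ)| := by exact_mod_cast Int.one_le_abs hki
  calc min (s 0) (min (s 1) (s 2)) ≤ s i := by
        fin_cases i
        · exact min_le_left _ _
        · exact le_trans (min_le_right _ _) (min_le_left _ _)
        · exact le_trans (min_le_right _ _) (min_le_right _ _)
    _ ≤ |(k i : ℝ)| * s i := by nlinarith [hs i]
    _ = |x i - g x i| := by rw [hcoord, abs_neg, abs_mul, abs_of_pos (hs i)]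
    _ ≤ ‖x - g x‖ := by simpa using coord_le_norm (x - g x) i
    _ = dist x (g x) := (dist_eq_norm _ _).symm

end G6aux

open scoped RealInnerProductSpace

/-- For the covering group `Γ` of a flat 3-manifold of class 𝒢₆, the infimum over `g ∈ Γ`, `g ≠ 1`, and `x` of `dist x (g x)` equals `min {α, β, γ} = min {|a|,|b|,|c|}`, and it is attained; hence the injectivity radius is half this value. -/
theorem G6_injectivity_radius
    (α β γ : ℝ) (hα : 0 < α) (hβ : 0 < β) (hγ : 0 < γ)
    (a b c : EuclideanSpace ℝ (Fin 3))
    (ha : a = α • EuclideanSpace.single (0 : Fin 3) (1 : ℝ))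
    (hb : b = β • EuclideanSpace.single (1 : Fin 3) (1 : ℝ))
    (hc : c = γ • EuclideanSpace.single (2 : Fin 3) (1 : ℝ))
    (A₁ A₂ A₃ : EuclideanSpace ℝ (Fin 3) ≃ₗᵢ[ℝ] EuclideanSpace ℝ (Fin 3))
    (hA₁ : ∀ (x : EuclideanSpace ℝ (Fin 3)) (i : Fin 3),
      A₁ x i = if i = 0 then x i else -x i)
    (hA₂ : ∀ (x : EuclideanSpace ℝ (Fin 3)) (i : Fin 3),
      A₂ x i = if i = 1 then x i else -x i)
    (hA₃ : ∀ (x : EuclideanSpace ℝ (Fin 3)) (i : Fin 3),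
      A₃ x i = if i = 2 then x i else -x i)
    (g₁ g₂ g₃ : EuclideanSpace ℝ (Fin 3) ≃ᵢ EuclideanSpace ℝ (Fin 3))
    (hg₁ : ∀ x, g₁ x = A₁ x + a)
    (hg₂ : ∀ x, g₂ x = A₂ x + (b + c))
    (hg₃ : ∀ x, g₃ x = A₃ x + (a + b + c))
    (Γ : Subgroup (EuclideanSpace ℝ (Fin 3) ≃ᵢ EuclideanSpace ℝ (Fin 3)))
    (hΓ : Γ = Subgroup.closure {g₁, g₂, g₃}) :
    IsLeast {d : ℝ | ∃ g ∈ Γ, g ≠ 1 ∧ ∃ x : EuclideanSpace ℝ (Fin 3), d = dist x (g x)} (min α (min β γ)) := by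
  have hspos : ∀ i : Fin 3, 0 < (![α, β, γ] : Fin 3 → ℝ) i := by
    intro i; fin_cases i <;> simpa
  have hP1 : G6aux.P ![α, β, γ] g₁ := by
    refine ⟨![1, -1, -1], ![1, 0, 0],
      ⟨by intro i; fin_cases i <;> norm_num, by norm_num [Matrix.cons_val_two, Matrix.tail_cons, Matrix.head_cons],
       by norm_num [G6aux.chi, Matrix.cons_val_two, Matrix.tail_cons, Matrix.head_cons], by norm_num [G6aux.chi, Matrix.cons_val_two, Matrix.tail_cons, Matrix.head_cons], by norm_num [G6aux.chi, Matrix.cons_val_two, Matrix.tail_cons, Matrix.head_cons]⟩, ?_⟩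
    intro x i
    rw [hg₁ x, PiLp.add_apply, hA₁ x i, ha]
    fin_cases i <;> simp [EuclideanSpace.single_apply]
  have hP2 : G6aux.P ![α, β, γ] g₂ := by
    refine ⟨![-1, 1, -1], ![0, 1, 1],
      ⟨by intro i; fin_cases i <;> norm_num, by norm_num [Matrix.cons_val_two, Matrix.tail_cons, Matrix.head_cons],
       by norm_num [G6aux.chi, Matrix.cons_val_two, Matrix.tail_cons, Matrix.head_cons], by norm_num [G6aux.chi, Matrix.cons_val_two, Matrix.tail_cons, Matrix.head_cons], by norm_num [G6aux.chi, Matrix.cons_val_two, Matrix.tail_cons, Matrix.head_cons]⟩, ?_⟩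
    intro x i
    rw [hg₂ x, PiLp.add_apply, hA₂ x i, PiLp.add_apply, hb, hc]
    fin_cases i <;> simp [EuclideanSpace.single_apply]
  have hP3 : G6aux.P ![α, β, γ] g₃ := by
    refine ⟨![-1, -1, 1], ![1, 1, 1],
      ⟨by intro i; fin_cases i <;> norm_num, by norm_num [Matrix.cons_val_two, Matrix.tail_cons, Matrix.head_cons],
       by norm_num [G6aux.chi, Matrix.cons_val_two, Matrix.tail_cons, Matrix.head_cons], by norm_num [G6aux.chi, Matrix.cons_val_two, Matrix.tail_cons, Matrix.head_cons], by norm_num [G6aux.chi, Matrix.cons_val_two, Matrix.tail_cons, Matrix.head_cons]⟩, ?_⟩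
    intro x i
    rw [hg₃ x, PiLp.add_apply, hA₃ x i, PiLp.add_apply, PiLp.add_apply, ha, hb, hc]
    fin_cases i <;> simp [EuclideanSpace.single_apply]
  have hsub : ∀ g ∈ Γ, G6aux.P ![α, β, γ] g := by
    rw [hΓ]
    intro g hg
    refine Subgroup.closure_induction (p := fun g _ => G6aux.P ![α, β, γ] g) ?_ ?_ ?_ ?_ hg
    · intro x hx
      simp only [Set.mem_insert_iff, Set.mem_singleton_iff] at hx
      rcases hx with rfl | rfl | rfl
      exacts [hP1, hP2, hP3]
    · exact G6aux.P_one _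
    · intro x y _ _ px py; exact G6aux.P_mul px py
    · intro x _ px; exact G6aux.P_inv px
  have hg₁Γ : g₁ ∈ Γ := by rw [hΓ]; exact Subgroup.subset_closure (by simp)
  have hg₂Γ : g₂ ∈ Γ := by rw [hΓ]; exact Subgroup.subset_closure (by simp)
  have hg₃Γ : g₃ ∈ Γ := by rw [hΓ]; exact Subgroup.subset_closure (by simp)
  have hone : ∀ z : EuclideanSpace ℝ (Fin 3),
      (1 : EuclideanSpace ℝ (Fin 3) ≃ᵢ EuclideanSpace ℝ (Fin 3)) z = z := fun _ => rfl
  -- g₁ realizes α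
  have memα : α ∈ {d : ℝ | ∃ g ∈ Γ, g ≠ 1 ∧ ∃ x : EuclideanSpace ℝ (Fin 3), d = dist x (g x)} := by
    have hco : g₁ 0 0 = α := by
      rw [hg₁ 0, PiLp.add_apply, hA₁, ha]
      simp [EuclideanSpace.single_apply]
    refine ⟨g₁, hg₁Γ, ?_, 0, ?_⟩
    · intro h1
      rw [h1, hone 0] at hco
      have : (0 : EuclideanSpace ℝ (Fin 3)) 0 = (0 : ℝ) := rfl
      rw [this] at hco
      linarith
    · have hA₁0 : A₁ (0 : EuclideanSpace ℝ (Fin 3)) = 0 := map_zero A₁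
      rw [hg₁ 0, hA₁0, zero_add, dist_zero_left, ha, norm_smul,
        EuclideanSpace.norm_single, norm_one, mul_one, Real.norm_eq_abs, abs_of_pos hα]
  -- g₂ realizes β
  have memβ : β ∈ {d : ℝ | ∃ g ∈ Γ, g ≠ 1 ∧ ∃ x : EuclideanSpace ℝ (Fin 3), d = dist x (g x)} := by
    set x₂ : EuclideanSpace ℝ (Fin 3) := WithLp.toLp 2 (fun i => if i = 2 then γ / 2 else 0) with hx₂
    have hv0 : x₂ 0 - g₂ x₂ 0 = 0 := by
      rw [hg₂ x₂, PiLp.add_apply, hA₂, PiLp.add_apply, hb, hc]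
      simp [hx₂, EuclideanSpace.single_apply]
    have hv1 : x₂ 1 - g₂ x₂ 1 = -β := by
      rw [hg₂ x₂, PiLp.add_apply, hA₂, PiLp.add_apply, hb, hc]
      simp [hx₂, EuclideanSpace.single_apply]
    have hv2 : x₂ 2 - g₂ x₂ 2 = 0 := by
      rw [hg₂ x₂, PiLp.add_apply, hA₂, PiLp.add_apply, hb, hc]
      simp [hx₂, EuclideanSpace.single_apply]
      ring
    refine ⟨g₂, hg₂Γ, ?_, x₂, ?_⟩
    · intro h1
      rw [h1, hone x₂] at hv1
      simp at hv1
      linarith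
    · rw [dist_eq_norm, EuclideanSpace.norm_eq, Fin.sum_univ_three]
      simp only [PiLp.sub_apply]
      rw [hv0, hv1, hv2]
      simp [Real.norm_eq_abs, abs_of_pos hβ]
      rw [Real.sqrt_sq hβ.le]
  -- g₃ realizes γ
  have memγ : γ ∈ {d : ℝ | ∃ g ∈ Γ, g ≠ 1 ∧ ∃ x : EuclideanSpace ℝ (Fin 3), d = dist x (g x)} := by
    set x₃ : EuclideanSpace ℝ (Fin 3) := WithLp.toLp 2 (fun i => if i = 2 then 0 else if i = 0 then α / 2 else β / 2) with hx₃
    have hv0 : x₃ 0 - g₃ x₃ 0 = 0 := by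
      rw [hg₃ x₃, PiLp.add_apply, hA₃, PiLp.add_apply, PiLp.add_apply, ha, hb, hc]
      simp [hx₃, EuclideanSpace.single_apply]
      ring
    have hv1 : x₃ 1 - g₃ x₃ 1 = 0 := by
      rw [hg₃ x₃, PiLp.add_apply, hA₃, PiLp.add_apply, PiLp.add_apply, ha, hb, hc]
      simp [hx₃, EuclideanSpace.single_apply]
      ring
    have hv2 : x₃ 2 - g₃ x₃ 2 = -γ := by
      rw [hg₃ x₃, PiLp.add_apply, hA₃, PiLp.add_apply, PiLp.add_apply, ha, hb, hc]
      simp [hx₃, EuclideanSpace.single_apply]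
    refine ⟨g₃, hg₃Γ, ?_, x₃, ?_⟩
    · intro h1
      rw [h1, hone x₃] at hv2
      simp at hv2
      linarith
    · rw [dist_eq_norm, EuclideanSpace.norm_eq, Fin.sum_univ_three]
      simp only [PiLp.sub_apply]
      rw [hv0, hv1, hv2]
      simp [Real.norm_eq_abs, abs_of_pos hγ]
      rw [Real.sqrt_sq hγ.le]
  constructor
  · rcases le_total β γ with hbc | hbc
    · rw [min_eq_left hbc]
      rcases le_total α β with hab | hab
      · rw [min_eq_left hab]; exact memα
      · rw [min_eq_right hab]; exact memβ
    · rw [min_eq_right hbc]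
      rcases le_total α γ with hac | hac
      · rw [min_eq_left hac]; exact memα
      · rw [min_eq_right hac]; exact memγ
  · rintro d ⟨g, hgΓ, hgne, x, rfl⟩
    have := G6aux.P_bound hspos (hsub g hgΓ) hgne x
    simpa using this
end

section
/- With Γ the 𝒢₆ covering group described in the context, the orbit of the origin under Γ, i.e. the set {g(0) : g ∈ Γ} ⊆ E, equals the lattice generated by the three vectors a, b + c and b − c, i.e. the ℤ-submodule {n₁ a + n₂ (b + c) + n₃ (b − c) : n₁, n₂, n₃ ∈ ℤ}. -/
open scoped RealInnerProductSpace

/-- The orbit of the origin under the covering group `Γ` of a flat 3-manifold of class 𝒢₆ is the lattice generated by `a`, `b + c` and `b - c`. -/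
theorem G6_orbit_of_origin
    (α β γ : ℝ) (hα : 0 < α) (hβ : 0 < β) (hγ : 0 < γ)
    (a b c : EuclideanSpace ℝ (Fin 3))
    (ha : a = α • EuclideanSpace.single (0 : Fin 3) (1 : ℝ))
    (hb : b = β • EuclideanSpace.single (1 : Fin 3) (1 : ℝ))
    (hc : c = γ • EuclideanSpace.single (2 : Fin 3) (1 : ℝ))
    (A₁ A₂ A₃ : EuclideanSpace ℝ (Fin 3) ≃ₗᵢ[ℝ] EuclideanSpace ℝ (Fin 3))
    (hA₁ : ∀ (x : EuclideanSpace ℝ (Fin 3)) (i : Fin 3),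
      A₁ x i = if i = 0 then x i else -x i)
    (hA₂ : ∀ (x : EuclideanSpace ℝ (Fin 3)) (i : Fin 3),
      A₂ x i = if i = 1 then x i else -x i)
    (hA₃ : ∀ (x : EuclideanSpace ℝ (Fin 3)) (i : Fin 3),
      A₃ x i = if i = 2 then x i else -x i)
    (g₁ g₂ g₃ : EuclideanSpace ℝ (Fin 3) ≃ᵢ EuclideanSpace ℝ (Fin 3))
    (hg₁ : ∀ x, g₁ x = A₁ x + a)
    (hg₂ : ∀ x, g₂ x = A₂ x + (b + c))
    (hg₃ : ∀ x, g₃ x = A₃ x + (a + b + c))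
    (Γ : Subgroup (EuclideanSpace ℝ (Fin 3) ≃ᵢ EuclideanSpace ℝ (Fin 3)))
    (hΓ : Γ = Subgroup.closure {g₁, g₂, g₃}) :
    {v : EuclideanSpace ℝ (Fin 3) | ∃ g ∈ Γ, g 0 = v} =
      {v : EuclideanSpace ℝ (Fin 3) |
        ∃ n₁ n₂ n₃ : ℤ, v = n₁ • a + n₂ • (b + c) + n₃ • (b - c)} := by
  -- images of the basis vectors under the point groups
  have hA₁a : A₁ a = a := by
    ext i; rw [hA₁]; subst ha; fin_cases i <;> simp [EuclideanSpace.single_apply]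
  have hA₁b : A₁ b = -b := by
    ext i; rw [hA₁]; subst hb; fin_cases i <;> simp [EuclideanSpace.single_apply]
  have hA₁c : A₁ c = -c := by
    ext i; rw [hA₁]; subst hc; fin_cases i <;> simp [EuclideanSpace.single_apply]
  have hA₂a : A₂ a = -a := by
    ext i; rw [hA₂]; subst ha; fin_cases i <;> simp [EuclideanSpace.single_apply]
  have hA₂b : A₂ b = b := by
    ext i; rw [hA₂]; subst hb; fin_cases i <;> simp [EuclideanSpace.single_apply]
  have hA₂c : A₂ c = -c := by
    ext i; rw [hA₂]; subst hc; fin_cases i <;> simp [EuclideanSpace.single_apply]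
  have hA₃a : A₃ a = -a := by
    ext i; rw [hA₃]; subst ha; fin_cases i <;> simp [EuclideanSpace.single_apply]
  have hA₃b : A₃ b = -b := by
    ext i; rw [hA₃]; subst hb; fin_cases i <;> simp [EuclideanSpace.single_apply]
  have hA₃c : A₃ c = c := by
    ext i; rw [hA₃]; subst hc; fin_cases i <;> simp [EuclideanSpace.single_apply]
  -- the point groups are involutions
  have hI₁ : ∀ x, A₁ (A₁ x) = x := by
    intro x; ext i; simp only [hA₁]; split_ifs <;> simp
  have hI₂ : ∀ x, A₂ (A₂ x) = x := by
    intro x; ext i; simp only [hA₂]; split_ifs <;> simp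
  have hI₃ : ∀ x, A₃ (A₃ x) = x := by
    intro x; ext i; simp only [hA₃]; split_ifs <;> simp
  -- images of the lattice generators
  have hA₁bc : A₁ (b + c) = -(b + c) := by rw [map_add, hA₁b, hA₁c]; abel
  have hA₁bc' : A₁ (b - c) = -(b - c) := by rw [map_sub, hA₁b, hA₁c]; abel
  have hA₂bc : A₂ (b + c) = b - c := by rw [map_add, hA₂b, hA₂c]; abel
  have hA₂bc' : A₂ (b - c) = b + c := by rw [map_sub, hA₂b, hA₂c]; abel
  have hA₃bc : A₃ (b + c) = -(b - c) := by rw [map_add, hA₃b, hA₃c]; abel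
  have hA₃bc' : A₃ (b - c) = -(b + c) := by rw [map_sub, hA₃b, hA₃c]; abel
  -- formulas for the inverses of the generators
  have hs₁ : ∀ v, g₁.symm v = A₁ v - a := by
    intro v
    apply g₁.injective
    rw [g₁.apply_symm_apply, hg₁, map_sub, hI₁, hA₁a]
    abel
  have hs₂ : ∀ v, g₂.symm v = A₂ v - (b - c) := by
    intro v
    apply g₂.injective
    rw [g₂.apply_symm_apply, hg₂, map_sub, hI₂, hA₂bc']
    abel
  have hs₃ : ∀ v, g₃.symm v = A₃ v + a + (b - c) := by
    intro v
    apply g₃.injective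
    rw [g₃.apply_symm_apply, hg₃, map_add, map_add, hI₃, hA₃a, hA₃bc']
    abel
  subst hΓ
  have m1 : g₁ ∈ Subgroup.closure {g₁, g₂, g₃} := Subgroup.subset_closure (by simp)
  have m2 : g₂ ∈ Subgroup.closure {g₁, g₂, g₃} := Subgroup.subset_closure (by simp)
  have m3 : g₃ ∈ Subgroup.closure {g₁, g₂, g₃} := Subgroup.subset_closure (by simp)
  ext v
  simp only [Set.mem_setOf_eq]
  constructor
  · rintro ⟨g, hg, rfl⟩
    -- the subgroup preserving the lattice
    set InL : EuclideanSpace ℝ (Fin 3) → Prop :=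
      fun w => ∃ n₁ n₂ n₃ : ℤ, w = n₁ • a + n₂ • (b + c) + n₃ • (b - c) with hInL
    let H : Subgroup (EuclideanSpace ℝ (Fin 3) ≃ᵢ EuclideanSpace ℝ (Fin 3)) :=
      { carrier := {h | ∀ w, InL w → InL (h w) ∧ InL (h.symm w)}
        one_mem' := by intro w hw; exact ⟨hw, hw⟩
        mul_mem' := by
          intro x y hx hy w hw
          exact ⟨(hx _ (hy w hw).1).1, (hy _ (hx w hw).2).2⟩
        inv_mem' := by
          intro x hx w hw
          refine ⟨(hx w hw).2, ?_⟩
          have : (x⁻¹ : _).symm = x := rfl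
          rw [this]
          exact (hx w hw).1 }
    have hsub : Subgroup.closure {g₁, g₂, g₃} ≤ H := by
      rw [Subgroup.closure_le]
      rintro h (rfl | rfl | rfl) <;> rintro w ⟨n₁, n₂, n₃, rfl⟩
      · constructor
        · refine ⟨n₁ + 1, -n₂, -n₃, ?_⟩
          rw [hg₁]
          simp only [map_add, map_zsmul, hA₁a, hA₁bc, hA₁bc']
          simp only [← Int.cast_smul_eq_zsmul ℝ]
          push_cast
          module
        · refine ⟨n₁ - 1, -n₂, -n₃, ?_⟩
          rw [hs₁]
          simp only [map_add, map_zsmul, hA₁a, hA₁bc, hA₁bc']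
          simp only [← Int.cast_smul_eq_zsmul ℝ]
          push_cast
          module
      · constructor
        · refine ⟨-n₁, n₃ + 1, n₂, ?_⟩
          rw [hg₂]
          simp only [map_add, map_zsmul, hA₂a, hA₂bc, hA₂bc']
          simp only [← Int.cast_smul_eq_zsmul ℝ]
          push_cast
          module
        · refine ⟨-n₁, n₃, n₂ - 1, ?_⟩
          rw [hs₂]
          simp only [map_add, map_zsmul, hA₂a, hA₂bc, hA₂bc']
          simp only [← Int.cast_smul_eq_zsmul ℝ]
          push_cast
          module
      · constructor
        · refine ⟨1 - n₁, 1 - n₃, -n₂, ?_⟩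
          rw [hg₃]
          simp only [map_add, map_zsmul, hA₃a, hA₃bc, hA₃bc']
          simp only [← Int.cast_smul_eq_zsmul ℝ]
          push_cast
          module
        · refine ⟨1 - n₁, -n₃, 1 - n₂, ?_⟩
          rw [hs₃]
          simp only [map_add, map_zsmul, hA₃a, hA₃bc, hA₃bc']
          simp only [← Int.cast_smul_eq_zsmul ℝ]
          push_cast
          module
    have hgH : g ∈ H := hsub hg
    have h0 : InL (0 : EuclideanSpace ℝ (Fin 3)) := ⟨0, 0, 0, by simp⟩
    exact (hgH 0 h0).1
  · rintro ⟨n₁, n₂, n₃, rfl⟩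
    -- squares of the generators are translations
    have hsq₁ : ∀ x, (g₁ * g₁) x = x + (a + a) := by
      intro x
      show g₁ (g₁ x) = _
      rw [hg₁, hg₁, map_add, hI₁, hA₁a]
      abel
    have hsq₂ : ∀ x, (g₂ * g₂) x = x + (b + b) := by
      intro x
      show g₂ (g₂ x) = _
      rw [hg₂, hg₂, map_add, hI₂, hA₂bc]
      abel
    have hsq₃ : ∀ x, (g₃ * g₃) x = x + (c + c) := by
      intro x
      show g₃ (g₃ x) = _
      rw [hg₃, hg₃, map_add, hI₃, map_add, map_add, hA₃a, hA₃b, hA₃c]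
      abel
    have msq₁ : g₁ * g₁ ∈ Subgroup.closure {g₁, g₂, g₃} := mul_mem m1 m1
    have msq₂ : g₂ * g₂ ∈ Subgroup.closure {g₁, g₂, g₃} := mul_mem m2 m2
    have msq₃ : g₃ * g₃ ∈ Subgroup.closure {g₁, g₂, g₃} := mul_mem m3 m3
    -- the orbit is stable under integer multiples of a translation in the group
    have shift : ∀ (d : EuclideanSpace ℝ (Fin 3))
        (u : EuclideanSpace ℝ (Fin 3) ≃ᵢ EuclideanSpace ℝ (Fin 3)),
        u ∈ Subgroup.closure {g₁, g₂, g₃} → (∀ x, u x = x + d) →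
        ∀ (m : ℤ) (w : EuclideanSpace ℝ (Fin 3)),
          (∃ g ∈ Subgroup.closure {g₁, g₂, g₃}, g 0 = w) →
          ∃ g ∈ Subgroup.closure {g₁, g₂, g₃}, g 0 = w + m • d := by
      intro d u hu hux m
      induction m using Int.induction_on with
      | zero => intro w hw; simpa using hw
      | succ k ih =>
        intro w hw
        obtain ⟨g, hg, hg0⟩ := ih w hw
        refine ⟨u * g, mul_mem hu hg, ?_⟩
        rw [IsometryEquiv.mul_apply, hg0, hux, add_smul, one_smul]
        abel
      | pred k ih =>
        intro w hw
        obtain ⟨g, hg, hg0⟩ := ih w hw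
        refine ⟨u⁻¹ * g, mul_mem (inv_mem hu) hg, ?_⟩
        have huu : u (w + (-(k : ℤ) - 1) • d) = w + (-(k : ℤ)) • d := by
          rw [hux, sub_smul, one_smul, neg_smul]
          abel
        rw [IsometryEquiv.mul_apply, hg0, ← huu, IsometryEquiv.inv_apply_self]
    -- base points of the four cosets
    have base0 : ∃ g ∈ Subgroup.closure {g₁, g₂, g₃},
        g 0 = (0 : EuclideanSpace ℝ (Fin 3)) := ⟨1, one_mem _, by simp⟩
    have base1 : ∃ g ∈ Subgroup.closure {g₁, g₂, g₃}, g 0 = a :=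
      ⟨g₁, m1, by rw [hg₁, map_zero, zero_add]⟩
    have base2 : ∃ g ∈ Subgroup.closure {g₁, g₂, g₃}, g 0 = b + c :=
      ⟨g₂, m2, by rw [hg₂, map_zero, zero_add]⟩
    have base3 : ∃ g ∈ Subgroup.closure {g₁, g₂, g₃}, g 0 = a + b + c :=
      ⟨g₃, m3, by rw [hg₃, map_zero, zero_add]⟩
    rcases Int.even_or_odd n₁ with ⟨p, hp⟩ | ⟨p, hp⟩ <;>
      rcases Int.even_or_odd (n₂ + n₃) with ⟨q, hq⟩ | ⟨q, hq⟩
    · -- n₁ even, n₂ + n₃ even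
      have hn₃ : n₃ = q + q - n₂ := by omega
      obtain ⟨g, hg, hg0⟩ := shift (c + c) (g₃ * g₃) msq₃ hsq₃ (n₂ - q) _
        (shift (b + b) (g₂ * g₂) msq₂ hsq₂ q _
          (shift (a + a) (g₁ * g₁) msq₁ hsq₁ p _ base0))
      refine ⟨g, hg, ?_⟩
      rw [hg0]
      subst hp hn₃
      simp only [← Int.cast_smul_eq_zsmul ℝ]
      push_cast
      module
    · -- n₁ even, n₂ + n₃ odd
      have hn₃ : n₃ = q + q + 1 - n₂ := by omega
      obtain ⟨g, hg, hg0⟩ := shift (c + c) (g₃ * g₃) msq₃ hsq₃ (n₂ - q - 1) _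
        (shift (b + b) (g₂ * g₂) msq₂ hsq₂ q _
          (shift (a + a) (g₁ * g₁) msq₁ hsq₁ p _ base2))
      refine ⟨g, hg, ?_⟩
      rw [hg0]
      subst hp hn₃
      simp only [← Int.cast_smul_eq_zsmul ℝ]
      push_cast
      module
    · -- n₁ odd, n₂ + n₃ even
      have hn₃ : n₃ = q + q - n₂ := by omega
      obtain ⟨g, hg, hg0⟩ := shift (c + c) (g₃ * g₃) msq₃ hsq₃ (n₂ - q) _
        (shift (b + b) (g₂ * g₂) msq₂ hsq₂ q _
          (shift (a + a) (g₁ * g₁) msq₁ hsq₁ p _ base1))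
      refine ⟨g, hg, ?_⟩
      rw [hg0]
      subst hp hn₃
      simp only [← Int.cast_smul_eq_zsmul ℝ]
      push_cast
      module
    · -- n₁ odd, n₂ + n₃ odd
      have hn₃ : n₃ = q + q + 1 - n₂ := by omega
      obtain ⟨g, hg, hg0⟩ := shift (c + c) (g₃ * g₃) msq₃ hsq₃ (n₂ - q - 1) _
        (shift (b + b) (g₂ * g₂) msq₂ hsq₂ q _
          (shift (a + a) (g₁ * g₁) msq₁ hsq₁ p _ base3))
      refine ⟨g, hg, ?_⟩
      rw [hg0]
      subst hp hn₃
      simp only [← Int.cast_smul_eq_zsmul ℝ]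
      push_cast
      module
end

section
/- With Γ the 𝒢₂ covering group described in the context, the infimum, over all g ∈ Γ with g ≠ id and all x ∈ E, of the distance dist(x, g x) equals min{ ‖a‖, m }, where m = min over pairs of integers (p,q) ≠ (0,0) of ‖p b + q c‖ (the length of the shortest nonzero vector of the planar lattice generated by b and c), and this infimum is attained. In particular, the injectivity radius of E/Γ is r_inj = (1/2) min{‖a‖, m}. -/
open scoped RealInnerProductSpace

private lemma orth_norm_le {F : Type*} [NormedAddCommGroup F] [InnerProductSpace ℝ F]
    {u w : F} (h : ⟪u, w⟫ = 0) : ‖u‖ ≤ ‖u + w‖ := by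
  have h2 := norm_add_sq_eq_norm_sq_add_norm_sq_real h
  nlinarith [norm_nonneg (u+w), norm_nonneg u, sq_nonneg ‖w‖]


/-- For the covering group `Γ` of a flat 3-manifold of class 𝒢₂ (generated by the screw motion `g : x ↦ A x + a` and the translations by `b` and `c`), the infimum over `h ∈ Γ`, `h ≠ 1`, and `x` of `dist x (h x)` equals `min {‖a‖, m}`, where `m` is the length of the shortest nonzero vector of the planar lattice generated by `b` and `c`, and this infimum is attained; hence the injectivity radius is `(1/2) min {‖a‖, m}`. -/
theorem G2_injectivity_radius
    (a b c : EuclideanSpace ℝ (Fin 3))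
    (hind : LinearIndependent ℝ ![a, b, c])
    (hab : ⟪a, b⟫ = 0) (hac : ⟪a, c⟫ = 0)
    (A : EuclideanSpace ℝ (Fin 3) ≃ₗᵢ[ℝ] EuclideanSpace ℝ (Fin 3))
    (hAa : A a = a) (hAb : A b = -b) (hAc : A c = -c)
    (g tb tc : EuclideanSpace ℝ (Fin 3) ≃ᵢ EuclideanSpace ℝ (Fin 3))
    (hg : ∀ x, g x = A x + a)
    (htb : ∀ x, tb x = x + b)
    (htc : ∀ x, tc x = x + c)
    (Γ : Subgroup (EuclideanSpace ℝ (Fin 3) ≃ᵢ EuclideanSpace ℝ (Fin 3)))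
    (hΓ : Γ = Subgroup.closure {g, tb, tc})
    (m : ℝ)
    (hm : IsLeast {r : ℝ | ∃ p q : ℤ, ¬(p = 0 ∧ q = 0) ∧ r = ‖p • b + q • c‖} m) :
    IsLeast {d : ℝ | ∃ h ∈ Γ, h ≠ 1 ∧ ∃ x : EuclideanSpace ℝ (Fin 3), d = dist x (h x)}
      (min ‖a‖ m) := by
  have hcard : Fintype.card (Fin 3) = Module.finrank ℝ (EuclideanSpace ℝ (Fin 3)) := by simp
  set B := basisOfLinearIndependentOfCardEqFinrank hind hcard with hBdef
  have hBcoe : ⇑B = ![a,b,c] := coe_basisOfLinearIndependentOfCardEqFinrank hind hcard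
  -- decomposition of an arbitrary vector
  have hdecomp : ∀ x : EuclideanSpace ℝ (Fin 3), ∃ α β γ : ℝ, x = α • a + β • b + γ • c := by
    intro x
    refine ⟨B.repr x 0, B.repr x 1, B.repr x 2, ?_⟩
    have h := B.sum_repr x
    rw [Fin.sum_univ_three, hBcoe] at h
    simp only [Matrix.cons_val_zero, Matrix.cons_val_one, Matrix.head_cons,
      Matrix.cons_val_two, Matrix.tail_cons] at h
    exact h.symm
  -- A is an involution
  have hA2 : ∀ x : EuclideanSpace ℝ (Fin 3), A (A x) = x := by
    intro x
    obtain ⟨α, β, γ, rfl⟩ := hdecomp x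
    simp [map_add, map_smul, hAa, hAb, hAc]
  -- computation of A on a decomposed vector
  have hAx : ∀ α β γ : ℝ, A (α • a + β • b + γ • c) = α • a - β • b - γ • c := by
    intro α β γ
    simp [map_add, map_smul, hAa, hAb, hAc, sub_eq_add_neg]
  -- a ≠ 0
  have ha0 : a ≠ 0 := by
    have := hind.ne_zero 0
    simpa using this
  have ha0' : 0 < ‖a‖ := norm_pos_iff.2 ha0
  -- nonzero lattice vectors
  have hbc : ∀ p q : ℤ, ¬(p = 0 ∧ q = 0) → (p • b + q • c : EuclideanSpace ℝ (Fin 3)) ≠ 0 := by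
    intro p q hpq h0
    have h0' : (0:ℝ) • a + (p:ℝ) • b + (q:ℝ) • c = 0 := by
      rw [Int.cast_smul_eq_zsmul, Int.cast_smul_eq_zsmul]
      simpa [add_assoc] using h0
    have := Fintype.linearIndependent_iff.1 hind ![0, (p:ℝ), (q:ℝ)]
      (by rw [Fin.sum_univ_three]; simpa using h0')
    have h1 := this 1
    have h2 := this 2
    simp only [Matrix.cons_val_one, Matrix.head_cons, Matrix.cons_val_two,
      Matrix.tail_cons, Int.cast_eq_zero, Matrix.cons_val_zero] at h1 h2
    exact hpq ⟨h1, h2⟩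
  -- orthogonality of a to lattice vectors
  have horth : ∀ u v : ℝ, ⟪a, u • b + v • c⟫ = (0:ℝ) := by
    intro u v
    rw [inner_add_right, real_inner_smul_right, real_inner_smul_right, hab, hac]
    ring
  -- classification of elements of Γ
  set P : (EuclideanSpace ℝ (Fin 3) ≃ᵢ EuclideanSpace ℝ (Fin 3)) → Prop := fun h =>
    (∃ n p q : ℤ, ∀ x, h x = x + ((2*n) • a + (p • b + q • c))) ∨
    (∃ n p q : ℤ, ∀ x, h x = A x + ((2*n+1) • a + (p • b + q • c))) with hPdef
  have hAv : ∀ (k : ℤ) (p q : ℤ), A ((k • a : EuclideanSpace ℝ (Fin 3)) + (p • b + q • c))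
      = k • a - (p • b + q • c) := by
    intro k p q
    simp [map_add, map_zsmul, hAa, hAb, hAc, sub_eq_add_neg]
    abel
  have hP : ∀ h ∈ Γ, P h := by
    rw [hΓ]
    intro h hh
    refine Subgroup.closure_induction (p := fun h _ => P h) ?_ ?_ ?_ ?_ hh
    · rintro x hx
      rcases hx with rfl | rfl | rfl
      · refine Or.inr ⟨0, 0, 0, fun x => ?_⟩
        rw [hg]; norm_num
      · refine Or.inl ⟨0, 1, 0, fun x => ?_⟩
        rw [htb]; norm_num
      · refine Or.inl ⟨0, 0, 1, fun x => ?_⟩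
        rw [htc]; norm_num
    · exact Or.inl ⟨0, 0, 0, fun x => by norm_num⟩
    · rintro h₁ h₂ _ _ (⟨n₁,p₁,q₁,hv₁⟩|⟨n₁,p₁,q₁,hv₁⟩) (⟨n₂,p₂,q₂,hv₂⟩|⟨n₂,p₂,q₂,hv₂⟩)
      · refine Or.inl ⟨n₁+n₂, p₁+p₂, q₁+q₂, fun x => ?_⟩
        rw [IsometryEquiv.mul_apply, hv₂, hv₁]
        push_cast [← Int.cast_smul_eq_zsmul ℝ]
        module
      · refine Or.inr ⟨n₁+n₂, p₁+p₂, q₁+q₂, fun x => ?_⟩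
        rw [IsometryEquiv.mul_apply, hv₁, hv₂]
        push_cast [← Int.cast_smul_eq_zsmul ℝ]
        module
      · refine Or.inr ⟨n₁+n₂, p₁-p₂, q₁-q₂, fun x => ?_⟩
        rw [IsometryEquiv.mul_apply, hv₁, hv₂, map_add, hAv]
        push_cast [← Int.cast_smul_eq_zsmul ℝ]
        module
      · refine Or.inl ⟨n₁+n₂+1, p₁-p₂, q₁-q₂, fun x => ?_⟩
        rw [IsometryEquiv.mul_apply, hv₂, hv₁, map_add, hAv, hA2]
        push_cast [← Int.cast_smul_eq_zsmul ℝ]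
        module
    · rintro h _ (⟨n,p,q,hv⟩|⟨n,p,q,hv⟩)
      · refine Or.inl ⟨-n, -p, -q, fun x => ?_⟩
        have key : h (x + ((2*(-n)) • a + ((-p) • b + (-q) • c))) = x := by
          rw [hv]
          push_cast [← Int.cast_smul_eq_zsmul ℝ]
          module
        have e : h⁻¹ x = h⁻¹ (h (x + ((2*(-n)) • a + ((-p) • b + (-q) • c)))) := by rw [key]
        rw [e, IsometryEquiv.inv_apply_self]
      · refine Or.inr ⟨-n-1, p, q, fun x => ?_⟩
        have key : h (A x + ((2*(-n-1)+1) • a + (p • b + q • c))) = x := by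
          rw [hv, map_add, hA2, hAv]
          push_cast [← Int.cast_smul_eq_zsmul ℝ]
          module
        have e : h⁻¹ x = h⁻¹ (h (A x + ((2*(-n-1)+1) • a + (p • b + q • c)))) := by rw [key]
        rw [e, IsometryEquiv.inv_apply_self]
  -- powers of translations
  have hzpow : ∀ (t : EuclideanSpace ℝ (Fin 3) ≃ᵢ EuclideanSpace ℝ (Fin 3))
      (v : EuclideanSpace ℝ (Fin 3)), (∀ x, t x = x + v) →
      ∀ (k : ℤ) (x : EuclideanSpace ℝ (Fin 3)), (t ^ k) x = x + k • v := by
    intro t v ht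
    have hinv : ∀ x, t⁻¹ x = x - v := by
      intro x
      have key : t (x - v) = x := by rw [ht]; abel
      have e : t⁻¹ x = t⁻¹ (t (x - v)) := by rw [key]
      rw [e, IsometryEquiv.inv_apply_self]
    intro k
    induction k using Int.induction_on with
    | zero => intro x; simp
    | succ k ih =>
      intro x
      rw [zpow_add_one, IsometryEquiv.mul_apply, ht, ih, add_smul, one_smul]
      abel
    | pred k ih =>
      intro x
      rw [zpow_sub_one, IsometryEquiv.mul_apply, hinv, ih, sub_smul, one_smul]
      abel
  constructor
  · -- the minimum is attained
    rcases le_total ‖a‖ m with hle | hle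
    · refine ⟨g, ?_, ?_, 0, ?_⟩
      · rw [hΓ]; exact Subgroup.subset_closure (by simp)
      · intro h1
        apply ha0
        have := congrArg (fun f : EuclideanSpace ℝ (Fin 3) ≃ᵢ EuclideanSpace ℝ (Fin 3) => f 0) h1
        simp only [hg, map_zero, zero_add, IsometryEquiv.coe_one, id_eq] at this
        exact this
      · rw [min_eq_left hle, hg, map_zero, zero_add, dist_zero_left]
    · obtain ⟨p, q, hpq, hmval⟩ := hm.1
      refine ⟨tb^p * tc^q, ?_, ?_, 0, ?_⟩
      · rw [hΓ]
        exact mul_mem (zpow_mem (Subgroup.subset_closure (by simp)) p)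
          (zpow_mem (Subgroup.subset_closure (by simp)) q)
      · intro h1
        apply hbc p q hpq
        have h0 := congrArg (fun f : EuclideanSpace ℝ (Fin 3) ≃ᵢ EuclideanSpace ℝ (Fin 3) => f 0) h1
        simp only [IsometryEquiv.mul_apply, IsometryEquiv.coe_one, id_eq] at h0
        have h2 : p • b + q • c = (tb ^ p) ((tc ^ q) 0) := by
          rw [hzpow tc c htc q 0, hzpow tb b htb p, zero_add]
          abel
        rw [h2, h0]
      · rw [min_eq_right hle, hmval, IsometryEquiv.mul_apply,
          hzpow tc c htc q 0, hzpow tb b htb p, zero_add, dist_zero_left]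
        congr 1
        abel
  · -- lower bound
    rintro d ⟨h, hhΓ, hne, x, rfl⟩
    rcases hP h hhΓ with ⟨n, p, q, hv⟩ | ⟨n, p, q, hv⟩
    · have hd : dist x (h x) = ‖(2*n) • a + (p • b + q • c)‖ := by
        rw [hv, dist_eq_norm,
          show x - (x + ((2*n) • a + (p • b + q • c))) = -((2*n) • a + (p • b + q • c)) from by abel,
          norm_neg]
      rw [hd]
      by_cases hn : n = 0
      · subst hn
        have hpq : ¬(p = 0 ∧ q = 0) := by
          rintro ⟨rfl, rfl⟩
          exact hne (IsometryEquiv.ext fun x => by simpa using hv x)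
        have : m ≤ ‖(p • b + q • c : EuclideanSpace ℝ (Fin 3))‖ := hm.2 ⟨p, q, hpq, rfl⟩
        calc min ‖a‖ m ≤ m := min_le_right _ _
          _ ≤ _ := by simpa using this
      · have h1 : ‖a‖ ≤ ‖((2*n) • a : EuclideanSpace ℝ (Fin 3))‖ := by
          rw [← Int.cast_smul_eq_zsmul ℝ, norm_smul, Real.norm_eq_abs]
          have : (1:ℝ) ≤ |((2*n : ℤ) : ℝ)| := by
            rw [← Int.cast_abs]
            exact_mod_cast Int.one_le_abs (by omega)
          nlinarith
        have h2 : ‖((2*n) • a : EuclideanSpace ℝ (Fin 3))‖ ≤ ‖(2*n) • a + (p • b + q • c)‖ := by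
          apply orth_norm_le
          rw [← Int.cast_smul_eq_zsmul ℝ, ← Int.cast_smul_eq_zsmul ℝ (M := EuclideanSpace ℝ (Fin 3)) p,
            ← Int.cast_smul_eq_zsmul ℝ (M := EuclideanSpace ℝ (Fin 3)) q,
            real_inner_smul_left, horth]
          ring
        calc min ‖a‖ m ≤ ‖a‖ := min_le_left _ _
          _ ≤ _ := h1.trans h2
    · obtain ⟨α, β, γ, rfl⟩ := hdecomp x
      have hkey : h (α • a + β • b + γ • c) - (α • a + β • b + γ • c)
          = (2*(n:ℝ)+1) • a + (((p:ℝ) - 2*β) • b + ((q:ℝ) - 2*γ) • c) := by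
        rw [hv, hAx]
        push_cast [← Int.cast_smul_eq_zsmul ℝ]
        module
      have hd : dist (α • a + β • b + γ • c) (h (α • a + β • b + γ • c))
          = ‖(2*(n:ℝ)+1) • a + (((p:ℝ) - 2*β) • b + ((q:ℝ) - 2*γ) • c)‖ := by
        rw [dist_eq_norm, ← norm_neg, neg_sub, hkey]
      rw [hd]
      have h1 : ‖a‖ ≤ ‖((2*(n:ℝ)+1) • a : EuclideanSpace ℝ (Fin 3))‖ := by
        rw [norm_smul, Real.norm_eq_abs]
        have : (1:ℝ) ≤ |(2*(n:ℝ)+1)| := by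
          have : ((2*n+1 : ℤ) : ℝ) = 2*(n:ℝ)+1 := by push_cast; ring
          rw [← this, ← Int.cast_abs]
          exact_mod_cast Int.one_le_abs (by omega)
        nlinarith
      have h2 : ‖((2*(n:ℝ)+1) • a : EuclideanSpace ℝ (Fin 3))‖
          ≤ ‖(2*(n:ℝ)+1) • a + (((p:ℝ) - 2*β) • b + ((q:ℝ) - 2*γ) • c)‖ := by
        apply orth_norm_le
        rw [real_inner_smul_left, horth]
        ring
      calc min ‖a‖ m ≤ ‖a‖ := min_le_left _ _
        _ ≤ _ := h1.trans h2
end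

section
/- With Γ the 𝒢₂ covering group described in the context, Γ acts freely on E: every element of Γ other than the identity has no fixed point in E. -/
open scoped RealInnerProductSpace

/-- The covering group `Γ` of a flat 3-manifold of class 𝒢₂ acts freely on Euclidean 3-space: every element of `Γ` other than the identity has no fixed point. -/
theorem G2_acts_freely
    (a b c : EuclideanSpace ℝ (Fin 3))
    (hind : LinearIndependent ℝ ![a, b, c])
    (hab : ⟪a, b⟫ = 0) (hac : ⟪a, c⟫ = 0)
    (A : EuclideanSpace ℝ (Fin 3) ≃ₗᵢ[ℝ] EuclideanSpace ℝ (Fin 3))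
    (hAa : A a = a) (hAb : A b = -b) (hAc : A c = -c)
    (g tb tc : EuclideanSpace ℝ (Fin 3) ≃ᵢ EuclideanSpace ℝ (Fin 3))
    (hg : ∀ x, g x = A x + a)
    (htb : ∀ x, tb x = x + b)
    (htc : ∀ x, tc x = x + c)
    (Γ : Subgroup (EuclideanSpace ℝ (Fin 3) ≃ᵢ EuclideanSpace ℝ (Fin 3)))
    (hΓ : Γ = Subgroup.closure {g, tb, tc}) :
    ∀ h ∈ Γ, h ≠ 1 → ∀ x : EuclideanSpace ℝ (Fin 3), h x ≠ x := by
  have ha0 : a ≠ 0 := by simpa using hind.ne_zero 0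
  have haa : ⟪a, a⟫ ≠ 0 := fun hh => ha0 (inner_self_eq_zero.mp hh)
  -- A is an involution
  have hA2 : ∀ x, A (A x) = x := by
    have hcard : Fintype.card (Fin 3) = Module.finrank ℝ (EuclideanSpace ℝ (Fin 3)) := by
      simp [finrank_euclideanSpace]
    let B := basisOfLinearIndependentOfCardEqFinrank hind hcard
    have hB : ∀ i, B i = ![a, b, c] i := fun i => by
      simp [B, coe_basisOfLinearIndependentOfCardEqFinrank]
    have hext : ((A.toLinearEquiv.toLinearMap) ∘ₗ (A.toLinearEquiv.toLinearMap))
        = LinearMap.id := by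
      apply B.ext
      intro i
      fin_cases i <;>
        simp [hB, hAa, hAb, hAc, Matrix.cons_val_zero, Matrix.cons_val_one]
    intro x
    simpa using LinearMap.congr_fun hext x
  have hAinner : ∀ w, ⟪a, A w⟫ = ⟪a, w⟫ := by
    intro w
    calc ⟪a, A w⟫ = ⟪A a, A w⟫ := by rw [hAa]
    _ = ⟪a, w⟫ := A.inner_map_map a w
  -- the invariant
  have key : ∀ h ∈ Γ,
      (∃ v, (∀ x, h x = x + v) ∧ ∃ m : ℤ, ⟪a, v⟫ = 2 * m * ⟪a, a⟫) ∨
      (∃ v, (∀ x, h x = A x + v) ∧ ∃ m : ℤ, ⟪a, v⟫ = (2 * m + 1) * ⟪a, a⟫) := by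
    intro h hh
    rw [hΓ] at hh
    induction hh using Subgroup.closure_induction with
    | mem x hx =>
      rcases hx with rfl | rfl | rfl
      · exact Or.inr ⟨a, hg, 0, by push_cast; ring⟩
      · exact Or.inl ⟨b, htb, 0, by push_cast; simpa using hab⟩
      · exact Or.inl ⟨c, htc, 0, by push_cast; simpa using hac⟩
    | one =>
      exact Or.inl ⟨0, fun x => by simp, 0, by simp⟩
    | mul x y hx hy px py =>
      rcases px with ⟨v, hv, m, hm⟩ | ⟨v, hv, m, hm⟩ <;>
        rcases py with ⟨w, hw, n, hn⟩ | ⟨w, hw, n, hn⟩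
      · refine Or.inl ⟨w + v, fun z => ?_, m + n, ?_⟩
        · rw [IsometryEquiv.mul_apply, hw, hv]; abel
        · rw [inner_add_right, hm, hn]; push_cast; ring
      · refine Or.inr ⟨w + v, fun z => ?_, m + n, ?_⟩
        · rw [IsometryEquiv.mul_apply, hw, hv]; abel
        · rw [inner_add_right, hm, hn]; push_cast; ring
      · refine Or.inr ⟨A w + v, fun z => ?_, m + n, ?_⟩
        · rw [IsometryEquiv.mul_apply, hw, hv, map_add]; abel
        · rw [inner_add_right, hAinner, hm, hn]; push_cast; ring
      · refine Or.inl ⟨A w + v, fun z => ?_, m + n + 1, ?_⟩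
        · rw [IsometryEquiv.mul_apply, hw, hv, map_add, hA2]; abel
        · rw [inner_add_right, hAinner, hm, hn]; push_cast; ring
    | inv x hx px =>
      rcases px with ⟨v, hv, m, hm⟩ | ⟨v, hv, m, hm⟩
      · refine Or.inl ⟨-v, fun z => ?_, -m, ?_⟩
        · apply x.injective
          rw [x.apply_inv_self, hv]; abel
        · rw [inner_neg_right, hm]; push_cast; ring
      · refine Or.inr ⟨-(A v), fun z => ?_, -m - 1, ?_⟩
        · apply x.injective
          rw [x.apply_inv_self, hv, map_add, hA2, map_neg, hA2]; abel
        · rw [inner_neg_right, hAinner, hm]; push_cast; ring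
  -- conclusion
  intro h hh hne x hx
  rcases key h hh with ⟨v, hv, m, hm⟩ | ⟨v, hv, m, hm⟩
  · have hv0 : v = 0 := by
      have := hv x
      rw [hx] at this
      have : x + v = x + 0 := by rw [add_zero]; exact this.symm
      exact (add_left_cancel this)
    apply hne
    ext z
    simp [hv z, hv0]
  · have h1 : ⟪a, v⟫ = 0 := by
      have hv' : v = x - A x := by
        have hxx : A x + v = x := (hv x).symm.trans hx
        exact eq_sub_of_add_eq' hxx
      rw [hv', inner_sub_right, hAinner, sub_self]
    rw [hm] at h1
    rcases mul_eq_zero.mp h1 with h2 | h2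
    · have : (2 * m + 1 : ℤ) = 0 := by exact_mod_cast h2
      omega
    · exact haa h2
end
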